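/- Let q be a prime power, F_q the field with q elements, and A = F_q[θ]. For integers s ≥ 0 and k ≥ 1 with s < k(q-1), the power sum S_k(t_1,…,t_s) = ∑_{a monic in A of degree k} a(t_1)⋯a(t_s) is identically zero as a polynomial in F_q[θ][t_1,…,t_s]. -/
import Mathlib

open Finset

/-- If the exponents `e j` sum to less than `k*(q-1)`, the product of power sums vanishes. -/
lemma aux_prod_sum_pow_eq_zero (F : Type*) [Field F] [Fintype F] {k s : ℕ}
    (e : Fin k → ℕ) (he : ∑ j, e j ≤ s) (h : s < k * (Fintype.card F - 1)) :
    ∏ j : Fin k, ∑ a : F, a ^ (e j) = 0 := by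
  obtain ⟨j, hj⟩ : ∃ j, e j < Fintype.card F - 1 := by
    by_contra hc
    push_neg at hc
    have hle : k * (Fintype.card F - 1) ≤ ∑ j, e j := by
      calc k * (Fintype.card F - 1) = ∑ _j : Fin k, (Fintype.card F - 1) := by
            simp [Finset.sum_const, mul_comm]
      _ ≤ ∑ j, e j := Finset.sum_le_sum fun j _ => hc j
    omega
  exact Finset.prod_eq_zero (mem_univ j) (FiniteField.sum_pow_lt_card_sub_one F (e j) hj)

/-- The key coefficient sum over `c : Fin k → F` vanishes. -/
lemma aux_sum_prod_elim_eq_zero (F : Type*) [Field F] [Fintype F] {k s : ℕ}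
    (h : s < k * (Fintype.card F - 1)) (g : Fin s → Option (Fin k)) :
    ∑ c : Fin k → F, ∏ i : Fin s, Option.elim (g i) 1 c = 0 := by
  classical
  set e : Fin k → ℕ := fun j => (univ.filter fun i => g i = some j).card with he_def
  have hfib : ∀ c : Fin k → F, ∏ i : Fin s, Option.elim (g i) 1 c
      = ∏ j : Fin k, c j ^ (e j) := by
    intro c
    rw [← Finset.prod_fiberwise_of_maps_to (g := g) (t := (univ : Finset (Option (Fin k))))
        (fun x _ => mem_univ _) (fun i => Option.elim (g i) 1 c)]
    rw [Fintype.prod_option]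
    have h1 : ∀ o : Option (Fin k),
        (∏ i ∈ univ.filter fun i => g i = o, Option.elim (g i) 1 c)
        = Option.elim o 1 c ^ (univ.filter fun i => g i = o).card := by
      intro o
      rw [Finset.prod_congr rfl (fun i hi => by
        rw [(Finset.mem_filter.mp hi).2]), Finset.prod_const]
    rw [h1 none, Finset.prod_congr rfl fun j _ => h1 (some j)]
    simp [he_def]
  simp only [hfib]
  have hsum : ∑ c : Fin k → F, ∏ j : Fin k, c j ^ (e j)
      = ∏ j : Fin k, ∑ a : F, a ^ (e j) := by
    rw [Finset.prod_univ_sum (fun _ => (univ : Finset F)) (fun j a => a ^ (e j))]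
    rw [Fintype.piFinset_univ]
  rw [hsum]
  apply aux_prod_sum_pow_eq_zero F e _ h
  have hcard : ∑ o : Option (Fin k), (univ.filter fun i => g i = o).card = s := by
    rw [← Finset.card_eq_sum_card_fiberwise (fun x (_ : x ∈ (univ : Finset (Fin s))) =>
      mem_univ (g x))]
    simp
  rw [Fintype.sum_option] at hcard
  simp only [he_def]
  omega

/-- Carlitz's vanishing theorem: for `s < k(q-1)`, the power sum
`S_k(t_1,…,t_s) = ∑_{a monic of degree k} a(t_1)⋯a(t_s)` vanishes.
Monic polynomials of degree `k` are parameterized by their lower-order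
coefficients `c : Fin k → F`. -/
theorem stmt0 (F : Type*) [Field F] [Fintype F] (s k : ℕ) (hk : 1 ≤ k)
    (h : s < k * (Fintype.card F - 1)) :
    ∑ c : Fin k → F, ∏ i : Fin s,
      Polynomial.aeval (MvPolynomial.X i)
        ((Polynomial.X : Polynomial F) ^ k +
          ∑ j : Fin k, Polynomial.C (c j) * Polynomial.X ^ (j : ℕ))
      = (0 : MvPolynomial (Fin s) F) := by
  classical
  have haeval : ∀ (c : Fin k → F) (i : Fin s),
      Polynomial.aeval (MvPolynomial.X i : MvPolynomial (Fin s) F)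
        ((Polynomial.X : Polynomial F) ^ k +
          ∑ j : Fin k, Polynomial.C (c j) * Polynomial.X ^ (j : ℕ))
      = ∑ o : Option (Fin k),
          MvPolynomial.C (Option.elim o 1 c) *
            (MvPolynomial.X i : MvPolynomial (Fin s) F) ^ (Option.elim o k Fin.val) := by
    intro c i
    rw [Fintype.sum_option]
    simp [map_add, map_pow, map_sum, map_mul, Polynomial.aeval_X, Polynomial.aeval_C,
      MvPolynomial.algebraMap_eq]
  calc ∑ c : Fin k → F, ∏ i : Fin s,
      Polynomial.aeval (MvPolynomial.X i)
        ((Polynomial.X : Polynomial F) ^ k +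
          ∑ j : Fin k, Polynomial.C (c j) * Polynomial.X ^ (j : ℕ))
      = ∑ c : Fin k → F, ∑ g ∈ Fintype.piFinset (fun _ : Fin s => (univ : Finset (Option (Fin k)))),
          ∏ i : Fin s, MvPolynomial.C (Option.elim (g i) 1 c) *
            (MvPolynomial.X i : MvPolynomial (Fin s) F) ^ (Option.elim (g i) k Fin.val) := by
        refine Finset.sum_congr rfl fun c _ => ?_
        rw [Finset.prod_congr rfl fun i _ => haeval c i]
        exact Finset.prod_univ_sum _ _
    _ = ∑ g ∈ Fintype.piFinset (fun _ : Fin s => (univ : Finset (Option (Fin k)))),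
          ∑ c : Fin k → F,
          ∏ i : Fin s, MvPolynomial.C (Option.elim (g i) 1 c) *
            (MvPolynomial.X i : MvPolynomial (Fin s) F) ^ (Option.elim (g i) k Fin.val) :=
        Finset.sum_comm
    _ = 0 := by
        refine Finset.sum_eq_zero fun g _ => ?_
        have : ∀ c : Fin k → F,
            ∏ i : Fin s, MvPolynomial.C (Option.elim (g i) 1 c) *
              (MvPolynomial.X i : MvPolynomial (Fin s) F) ^ (Option.elim (g i) k Fin.val)
            = MvPolynomial.C (∏ i : Fin s, Option.elim (g i) 1 c) *
              ∏ i : Fin s, (MvPolynomial.X i : MvPolynomial (Fin s) F) ^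
                (Option.elim (g i) k Fin.val) := by
          intro c
          rw [Finset.prod_mul_distrib, map_prod]
        simp only [this, ← Finset.sum_mul, ← map_sum]
        rw [aux_sum_prod_elim_eq_zero F h g]
        simp
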